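/- arXiv:2412.02487 — 4 statements merged into one kernel-verified Lean document; each statement's English description precedes it below -/
import Mathlib

section
/- The function M¹(s1,s2,s4) = g(s1)/(2G) + F(s1)·[ (√s1/(2G λ(s1)²))·sin²(λ(s1)(s2+ψ(s1))) − (√s1 s4²/(8G))·exp(2i λ(s1)(s2+ψ(s1))) ] satisfies (∂_{s2}M¹)·(∂_{s2}∂_{s4}M¹) − (∂_{s4}M¹)·(∂_{s2}²M¹) = F(s1)²·s1·s4/(4G²), i.e. the covariance equation with μ = F(s1)². -/
/-- The (complex-valued) solution `M¹` satisfies the covariance equation with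
`μ = F(s1)²`. -/
theorem stmt1 (G : ℝ) (hG : 0 < G) (g F l ψ : ℝ → ℝ) (s1 s2 s4 : ℝ)
    (hs1 : 0 < s1) (hl : l s1 ≠ 0) :
    let M : ℝ → ℝ → ℝ → ℂ := fun a b c =>
      ((g a / (2 * G) : ℝ) : ℂ) +
        (F a : ℂ) *
          (((Real.sqrt a / (2 * G * (l a) ^ 2) *
              (Real.sin (l a * (b + ψ a))) ^ 2 : ℝ) : ℂ)
            - ((Real.sqrt a * c ^ 2 / (8 * G) : ℝ) : ℂ) *
                Complex.exp (2 * Complex.I * ((l a * (b + ψ a) : ℝ) : ℂ)))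
    (deriv (fun b => M s1 b s4) s2) *
        (deriv (fun c => deriv (fun b => M s1 b c) s2) s4) -
      (deriv (fun c => M s1 s2 c) s4) *
        (deriv (fun b => deriv (fun b' => M s1 b' s4) b) s2) =
      (((F s1) ^ 2 * s1 * s4 / (4 * G ^ 2) : ℝ) : ℂ) := by
  intro M
  set L : ℝ := l s1 with hL
  set S : ℝ := Real.sqrt s1 with hS
  set Fc : ℂ := (F s1 : ℂ) with hFc
  -- θ as a function of b
  have hθ : ∀ b : ℝ, HasDerivAt (fun b' : ℝ => L * (b' + ψ s1)) L b := by
    intro b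
    simpa using ((hasDerivAt_id b).add_const (ψ s1)).const_mul L
  -- derivative in b, for any b, c
  have hb : ∀ b c : ℝ, HasDerivAt (fun b' => M s1 b' c)
      (Fc * (((S / (2 * G * L ^ 2) * (L * Real.sin (2 * (L * (b + ψ s1)))) : ℝ) : ℂ)
        - ((S * c ^ 2 / (8 * G) : ℝ) : ℂ) *
            (Complex.exp (2 * Complex.I * ((L * (b + ψ s1) : ℝ) : ℂ)) * (2 * Complex.I * (L : ℂ))))) b := by
    intro b c
    have h1 : HasDerivAt (fun b' : ℝ =>
        S / (2 * G * L ^ 2) * Real.sin (L * (b' + ψ s1)) ^ 2)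
        (S / (2 * G * L ^ 2) * ((2 : ℕ) * Real.sin (L * (b + ψ s1)) ^ 1 *
          (Real.cos (L * (b + ψ s1)) * L))) b :=
      (((hθ b).sin.pow 2)).const_mul _
    have h2 : HasDerivAt (fun b' : ℝ =>
        ((S * c ^ 2 / (8 * G) : ℝ) : ℂ) *
          Complex.exp (2 * Complex.I * ((L * (b' + ψ s1) : ℝ) : ℂ)))
        (((S * c ^ 2 / (8 * G) : ℝ) : ℂ) *
          (Complex.exp (2 * Complex.I * ((L * (b + ψ s1) : ℝ) : ℂ)) * (2 * Complex.I * (L : ℂ)))) b := by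
      have hin : HasDerivAt (fun b' : ℝ => 2 * Complex.I * ((L * (b' + ψ s1) : ℝ) : ℂ))
          (2 * Complex.I * (L : ℂ)) b := ((hθ b).ofReal_comp).const_mul (2 * Complex.I)
      exact (hin.cexp).const_mul _
    have h := ((h1.ofReal_comp.sub h2).const_mul Fc).const_add ((g s1 / (2 * G) : ℝ) : ℂ)
    refine h.congr_deriv ?_
    push_cast [Real.sin_two_mul]
    ring
  -- deriv in b as an equation
  have hbderiv : ∀ b c : ℝ, deriv (fun b' => M s1 b' c) b =
      Fc * (((S / (2 * G * L ^ 2) * (L * Real.sin (2 * (L * (b + ψ s1)))) : ℝ) : ℂ)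
        - ((S * c ^ 2 / (8 * G) : ℝ) : ℂ) *
            (Complex.exp (2 * Complex.I * ((L * (b + ψ s1) : ℝ) : ℂ)) * (2 * Complex.I * (L : ℂ)))) :=
    fun b c => (hb b c).deriv
  -- derivative in c of M
  have hc : HasDerivAt (fun c => M s1 s2 c)
      (Fc * (0 - ((S * (2 * s4) / (8 * G) : ℝ) : ℂ) *
          Complex.exp (2 * Complex.I * ((L * (s2 + ψ s1) : ℝ) : ℂ)))) s4 := by
    have h1 : HasDerivAt (fun c : ℝ => S * c ^ 2 / (8 * G)) (S * (2 * s4) / (8 * G)) s4 := by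
      have := ((hasDerivAt_pow 2 s4).const_mul S).div_const (8 * G)
      simpa using this
    have h := (((hasDerivAt_const s4 (((S / (2 * G * L ^ 2) *
        Real.sin (L * (s2 + ψ s1)) ^ 2 : ℝ) : ℂ))).sub
        ((h1.ofReal_comp).mul_const
          (Complex.exp (2 * Complex.I * ((L * (s2 + ψ s1) : ℝ) : ℂ))))).const_mul Fc).const_add
        ((g s1 / (2 * G) : ℝ) : ℂ)
    exact h
  -- mixed derivative ∂c ∂b
  have hcb : HasDerivAt (fun c => deriv (fun b => M s1 b c) s2)
      (Fc * (0 - ((S * (2 * s4) / (8 * G) : ℝ) : ℂ) *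
          (Complex.exp (2 * Complex.I * ((L * (s2 + ψ s1) : ℝ) : ℂ)) * (2 * Complex.I * (L : ℂ))))) s4 := by
    have heq : (fun c => deriv (fun b => M s1 b c) s2) = fun c =>
        Fc * (((S / (2 * G * L ^ 2) * (L * Real.sin (2 * (L * (s2 + ψ s1)))) : ℝ) : ℂ)
          - ((S * c ^ 2 / (8 * G) : ℝ) : ℂ) *
              (Complex.exp (2 * Complex.I * ((L * (s2 + ψ s1) : ℝ) : ℂ)) * (2 * Complex.I * (L : ℂ)))) :=
      funext fun c => hbderiv s2 c
    rw [heq]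
    have h1 : HasDerivAt (fun c : ℝ => S * c ^ 2 / (8 * G)) (S * (2 * s4) / (8 * G)) s4 := by
      have := ((hasDerivAt_pow 2 s4).const_mul S).div_const (8 * G)
      simpa using this
    exact (((hasDerivAt_const s4 _).sub ((h1.ofReal_comp).mul_const _)).const_mul Fc)
  -- second derivative in b
  have hbb : HasDerivAt (fun b => deriv (fun b' => M s1 b' s4) b)
      (Fc * (((S / (2 * G * L ^ 2) * (L * (Real.cos (2 * (L * (s2 + ψ s1))) * (2 * L))) : ℝ) : ℂ)
        - ((S * s4 ^ 2 / (8 * G) : ℝ) : ℂ) *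
            ((Complex.exp (2 * Complex.I * ((L * (s2 + ψ s1) : ℝ) : ℂ)) * (2 * Complex.I * (L : ℂ)))
              * (2 * Complex.I * (L : ℂ))))) s2 := by
    have heq : (fun b => deriv (fun b' => M s1 b' s4) b) = fun b =>
        Fc * (((S / (2 * G * L ^ 2) * (L * Real.sin (2 * (L * (b + ψ s1)))) : ℝ) : ℂ)
          - ((S * s4 ^ 2 / (8 * G) : ℝ) : ℂ) *
              (Complex.exp (2 * Complex.I * ((L * (b + ψ s1) : ℝ) : ℂ)) * (2 * Complex.I * (L : ℂ)))) :=
      funext fun b => hbderiv b s4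
    rw [heq]
    have hθ2 : HasDerivAt (fun b : ℝ => 2 * (L * (b + ψ s1))) (2 * L) s2 := by
      simpa using (hθ s2).const_mul 2
    have h1 : HasDerivAt (fun b : ℝ => S / (2 * G * L ^ 2) * (L * Real.sin (2 * (L * (b + ψ s1)))))
        (S / (2 * G * L ^ 2) * (L * (Real.cos (2 * (L * (s2 + ψ s1))) * (2 * L)))) s2 :=
      ((hθ2.sin).const_mul L).const_mul _
    have hin : HasDerivAt (fun b : ℝ => 2 * Complex.I * ((L * (b + ψ s1) : ℝ) : ℂ))
        (2 * Complex.I * (L : ℂ)) s2 := ((hθ s2).ofReal_comp).const_mul (2 * Complex.I)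
    exact ((h1.ofReal_comp.sub (((hin.cexp).mul_const _).const_mul _)).const_mul Fc)
  rw [hbderiv s2 s4, hc.deriv, hcb.deriv, hbb.deriv]
  -- now pure algebra
  have hE : Complex.exp (2 * Complex.I * ((L * (s2 + ψ s1) : ℝ) : ℂ)) =
      ((Real.cos (L * (s2 + ψ s1)) : ℂ) + (Real.sin (L * (s2 + ψ s1)) : ℂ) * Complex.I) ^ 2 := by
    rw [show (2 * Complex.I * ((L * (s2 + ψ s1) : ℝ) : ℂ)) =
      ((L * (s2 + ψ s1) : ℝ) : ℂ) * Complex.I + ((L * (s2 + ψ s1) : ℝ) : ℂ) * Complex.I by ring,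
      Complex.exp_add, Complex.exp_mul_I, Complex.ofReal_cos, Complex.ofReal_sin]
    ring
  rw [hE]
  have hsin2 : Real.sin (2 * (L * (s2 + ψ s1))) =
      2 * Real.sin (L * (s2 + ψ s1)) * Real.cos (L * (s2 + ψ s1)) := Real.sin_two_mul _
  have hcos2 : Real.cos (2 * (L * (s2 + ψ s1))) = 2 * Real.cos (L * (s2 + ψ s1)) ^ 2 - 1 :=
    Real.cos_two_mul _
  rw [hsin2, hcos2]
  set cs : ℝ := Real.cos (L * (s2 + ψ s1))
  set sn : ℝ := Real.sin (L * (s2 + ψ s1))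
  have hpy : (sn : ℂ) ^ 2 = 1 - (cs : ℂ) ^ 2 := by
    have := Real.sin_sq_add_cos_sq (L * (s2 + ψ s1))
    have : sn ^ 2 = 1 - cs ^ 2 := by linarith
    exact_mod_cast this
  have hSq : (S : ℂ) ^ 2 = (s1 : ℂ) := by
    exact_mod_cast congrArg Complex.ofReal (Real.sq_sqrt hs1.le)
  have hGc : (G : ℂ) ≠ 0 := by exact_mod_cast hG.ne'
  have hLc : (L : ℂ) ≠ 0 := by exact_mod_cast hl
  have hI : Complex.I ^ 2 = -1 := Complex.I_sq
  push_cast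
  field_simp [hGc, hLc]
  have h8 : (8 : ℂ) * (G : ℂ) ≠ 0 := mul_ne_zero (by norm_num) hGc
  have h2L : (2 : ℂ) * (G : ℂ) * (L : ℂ) ^ 2 ≠ 0 :=
    mul_ne_zero (mul_ne_zero two_ne_zero hGc) (pow_ne_zero 2 hLc)
  have hd1 : (2 : ℂ) * (G : ℂ) * (L : ℂ) ^ 2 * (8 * (G : ℂ)) * (8 * (G : ℂ)) ≠ 0 :=
    mul_ne_zero (mul_ne_zero h2L h8) h8
  have hd2 : (8 : ℂ) * (G : ℂ) * ((2 : ℂ) * (G : ℂ) * (L : ℂ) ^ 2 * (8 * (G : ℂ))) ≠ 0 :=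
    mul_ne_zero h8 (mul_ne_zero h2L h8)
  have key : ((cs : ℂ) + (sn : ℂ) * Complex.I) ^ 2 *
      (2 * (cs : ℂ) ^ 2 - 1 - 2 * Complex.I * (sn : ℂ) * (cs : ℂ)) = 1 := by
    linear_combination ((cs : ℂ) ^ 2 - (sn : ℂ) ^ 2 + 2 * (cs : ℂ) * (sn : ℂ) * Complex.I
        + ((sn : ℂ) ^ 2 + (cs : ℂ) ^ 2 - 1) + 2) * hpy
      + ((sn : ℂ) ^ 2 * (2 * (cs : ℂ) ^ 2 - 1 - 2 * Complex.I * (sn : ℂ) * (cs : ℂ))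
        - 4 * (sn : ℂ) ^ 2 * (cs : ℂ) ^ 2) * hI
  simp only [hFc]
  linear_combination (64 * (F s1 : ℂ) ^ 2 * (L : ℂ) * (s4 : ℂ) * (S : ℂ) ^ 2) * key
    + (64 * (F s1 : ℂ) ^ 2 * (L : ℂ) * (s4 : ℂ)) * hSq
end

section
/- The function M²(s1,s2,s4) = g(s1)/(2G) + F(s1)·[ (√s1/(2G λ(s1)²))·sin²(λ(s1)(s2+ψ(s1))) − (√s1 s4²/8G)·cos²(λ(s1)(s2+ψ(s1))) ] satisfies the covariance equation (∂_{s2}M²)·(∂_{s2}∂_{s4}M²) − (∂_{s4}M²)·(∂_{s2}²M²) = μ·s1·s4/(4G²) with μ = F(s1)·[F(s1) + (λ(s1)²/√s1)·(g(s1) − 2G·M²)]. -/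
/-- The solution `M²` satisfies the covariance equation with
`μ = F(s1)·[F(s1) + (λ(s1)²/√s1)·(g(s1) − 2G·M²)]`. -/
theorem stmt2 (G : ℝ) (hG : 0 < G) (g F l ψ : ℝ → ℝ) (s1 s2 s4 : ℝ)
    (hs1 : 0 < s1) (hl : l s1 ≠ 0) :
    let M : ℝ → ℝ → ℝ → ℝ := fun a b c =>
      g a / (2 * G) +
        F a * (Real.sqrt a / (2 * G * (l a) ^ 2) *
            (Real.sin (l a * (b + ψ a))) ^ 2
          - Real.sqrt a * c ^ 2 / (8 * G) *
            (Real.cos (l a * (b + ψ a))) ^ 2)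
    (deriv (fun b => M s1 b s4) s2) *
        (deriv (fun c => deriv (fun b => M s1 b c) s2) s4) -
      (deriv (fun c => M s1 s2 c) s4) *
        (deriv (fun b => deriv (fun b' => M s1 b' s4) b) s2) =
      (F s1 * (F s1 + (l s1) ^ 2 / Real.sqrt s1 * (g s1 - 2 * G * M s1 s2 s4)))
        * s1 * s4 / (4 * G ^ 2) := by
  intro M
  have hx0 : (0:ℝ) < Real.sqrt s1 := Real.sqrt_pos.mpr hs1
  have hs : Real.sqrt s1 ^ 2 = s1 := Real.sq_sqrt hs1.le
  have hθ : ∀ b : ℝ, HasDerivAt (fun b => l s1 * (b + ψ s1)) (l s1) b := by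
    intro b
    simpa using ((hasDerivAt_id b).add_const (ψ s1)).const_mul (l s1)
  have hsin : ∀ b : ℝ, HasDerivAt (fun b => Real.sin (l s1 * (b + ψ s1)))
      (Real.cos (l s1 * (b + ψ s1)) * l s1) b := fun b =>
    (Real.hasDerivAt_sin _).comp b (hθ b)
  have hcos : ∀ b : ℝ, HasDerivAt (fun b => Real.cos (l s1 * (b + ψ s1)))
      (-Real.sin (l s1 * (b + ψ s1)) * l s1) b := fun b =>
    (Real.hasDerivAt_cos _).comp b (hθ b)
  -- derivative in the second argument
  have key : ∀ b c : ℝ, HasDerivAt (fun b => M s1 b c)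
      (F s1 * (2 * Real.sin (l s1 * (b + ψ s1)) * Real.cos (l s1 * (b + ψ s1)) * l s1 *
        (Real.sqrt s1 / (2 * G * (l s1) ^ 2) + Real.sqrt s1 / (8 * G) * c ^ 2))) b := by
    intro b c
    have h0 : (fun b => M s1 b c) = (fun b => g s1 / (2 * G) + F s1 *
        ((Real.sqrt s1 / (2 * G * (l s1) ^ 2)) * Real.sin (l s1 * (b + ψ s1)) ^ 2 -
          (Real.sqrt s1 / (8 * G) * c ^ 2) * Real.cos (l s1 * (b + ψ s1)) ^ 2)) := by
      funext y; simp only [M]; ring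
    rw [h0]
    have h1 := (((((hsin b).pow 2).const_mul (Real.sqrt s1 / (2 * G * (l s1) ^ 2))).sub
      (((hcos b).pow 2).const_mul (Real.sqrt s1 / (8 * G) * c ^ 2))).const_mul
      (F s1)).const_add (g s1 / (2 * G))
    refine h1.congr_deriv ?_
    push_cast
    ring
  have d1 := (key s2 s4).deriv
  -- mixed derivative
  have hcfun : (fun c => deriv (fun b => M s1 b c) s2) = fun c =>
      (F s1 * (2 * Real.sin (l s1 * (s2 + ψ s1)) * Real.cos (l s1 * (s2 + ψ s1)) * l s1)) *
        (Real.sqrt s1 / (2 * G * (l s1) ^ 2) + Real.sqrt s1 / (8 * G) * c ^ 2) := by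
    funext c
    rw [(key s2 c).deriv]
    ring
  have hpow : HasDerivAt (fun c : ℝ =>
      Real.sqrt s1 / (2 * G * (l s1) ^ 2) + Real.sqrt s1 / (8 * G) * c ^ 2)
      (Real.sqrt s1 / (8 * G) * (2 * s4)) s4 := by
    have h1 := ((hasDerivAt_pow 2 s4).const_mul (Real.sqrt s1 / (8 * G))).const_add
      (Real.sqrt s1 / (2 * G * (l s1) ^ 2))
    refine h1.congr_deriv ?_
    push_cast
    ring
  have d2 : deriv (fun c => deriv (fun b => M s1 b c) s2) s4 =
      (F s1 * (2 * Real.sin (l s1 * (s2 + ψ s1)) * Real.cos (l s1 * (s2 + ψ s1)) * l s1)) *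
        (Real.sqrt s1 / (8 * G) * (2 * s4)) := by
    rw [hcfun]
    exact (hpow.const_mul _).deriv
  -- derivative in the third argument
  have d3 : deriv (fun c => M s1 s2 c) s4 =
      (-(F s1 * (Real.sqrt s1 / (8 * G)) * Real.cos (l s1 * (s2 + ψ s1)) ^ 2)) * (2 * s4) := by
    have h0 : (fun c => M s1 s2 c) = fun c =>
        (g s1 / (2 * G) + F s1 * (Real.sqrt s1 / (2 * G * (l s1) ^ 2) *
          Real.sin (l s1 * (s2 + ψ s1)) ^ 2)) +
        (-(F s1 * (Real.sqrt s1 / (8 * G)) * Real.cos (l s1 * (s2 + ψ s1)) ^ 2)) * c ^ 2 := by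
      funext c; simp only [M]; ring
    rw [h0]
    have h1 := ((hasDerivAt_pow 2 s4).const_mul
      (-(F s1 * (Real.sqrt s1 / (8 * G)) * Real.cos (l s1 * (s2 + ψ s1)) ^ 2))).const_add
      (g s1 / (2 * G) + F s1 * (Real.sqrt s1 / (2 * G * (l s1) ^ 2) *
        Real.sin (l s1 * (s2 + ψ s1)) ^ 2))
    rw [h1.deriv]
    push_cast
    ring
  -- second derivative in the second argument
  have hbfun : (fun b => deriv (fun b' => M s1 b' s4) b) = fun b =>
      (F s1 * 2 * l s1 * (Real.sqrt s1 / (2 * G * (l s1) ^ 2) +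
        Real.sqrt s1 / (8 * G) * s4 ^ 2)) *
        (Real.sin (l s1 * (b + ψ s1)) * Real.cos (l s1 * (b + ψ s1))) := by
    funext b
    rw [(key b s4).deriv]
    ring
  have d4 : deriv (fun b => deriv (fun b' => M s1 b' s4) b) s2 =
      (F s1 * 2 * l s1 * (Real.sqrt s1 / (2 * G * (l s1) ^ 2) +
        Real.sqrt s1 / (8 * G) * s4 ^ 2)) *
        (Real.cos (l s1 * (s2 + ψ s1)) * l s1 * Real.cos (l s1 * (s2 + ψ s1)) +
          Real.sin (l s1 * (s2 + ψ s1)) * (-Real.sin (l s1 * (s2 + ψ s1)) * l s1)) := by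
    rw [hbfun]
    exact (((hsin s2).mul (hcos s2)).const_mul _).deriv
  rw [d1, d2, d3, d4]
  simp only [M]
  set u := Real.sin (l s1 * (s2 + ψ s1)) with hu
  set v := Real.cos (l s1 * (s2 + ψ s1)) with hv
  have huv : u ^ 2 = 1 - v ^ 2 := by
    have := Real.sin_sq_add_cos_sq (l s1 * (s2 + ψ s1))
    rw [← hu, ← hv] at this
    linarith
  set x := Real.sqrt s1 with hxdef
  rw [← hs]
  have hl2 : l (x ^ 2) ≠ 0 := by rw [hs]; exact hl
  have hx : x ≠ 0 := hx0.ne'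
  field_simp
  ring_nf
  rw [huv]
  ring
end

section
/- For the solution M³, the factor μ₃ = F(s1)²·[1 − (2Gλ(s1)(M³−h(s1))/√s1)²] satisfies the second covariance equation (∂_{s2}μ₃)·(∂_{s4}M³) − (∂_{s4}μ₃)·(∂_{s2}M³) = 0. -/
/-- For the solution `M³`, the factor `μ₃` satisfies the second covariance
equation `(∂_{s2}μ₃)·(∂_{s4}M³) − (∂_{s4}μ₃)·(∂_{s2}M³) = 0`. -/
theorem stmt4 (G : ℝ) (hG : 0 < G) (h F l ψ : ℝ → ℝ) (s1 s2 s4 : ℝ)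
    (hs1 : 0 < s1) (hl : l s1 ≠ 0) :
    let M : ℝ → ℝ → ℝ → ℝ := fun a b c =>
      h a + F a * Real.sqrt a / (2 * G * l a) *
        Real.sin (l a * (1 + b ^ 2 - c ^ 2 / 4 + ψ a))
    let μ : ℝ → ℝ → ℝ → ℝ := fun a b c =>
      (F a) ^ 2 * (1 - (2 * G * l a * (M a b c - h a) / Real.sqrt a) ^ 2)
    (deriv (fun b => μ s1 b s4) s2) * (deriv (fun c => M s1 s2 c) s4) -
      (deriv (fun c => μ s1 s2 c) s4) * (deriv (fun b => M s1 b s4) s2) = 0 := by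
  intro M μ
  simp only [M, μ, add_sub_cancel_left]
  set k := l s1
  set A := F s1 * Real.sqrt s1 / (2 * G * k) with hA
  -- inner functions and their derivatives
  have hub : HasDerivAt (fun b : ℝ => k * (1 + b ^ 2 - s4 ^ 2 / 4 + ψ s1))
      (k * (2 * s2 ^ 1)) s2 :=
    ((((hasDerivAt_pow 2 s2).const_add 1).sub_const _).add_const _).const_mul k
  have huc : HasDerivAt (fun c : ℝ => k * (1 + s2 ^ 2 - c ^ 2 / 4 + ψ s1))
      (k * (-(2 * s4 ^ 1 / 4))) s4 := by
    have : HasDerivAt (fun c : ℝ => 1 + s2 ^ 2 - c ^ 2 / 4 + ψ s1)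
        (-(2 * s4 ^ 1 / 4)) s4 :=
      (((hasDerivAt_pow 2 s4).div_const 4).const_sub _).add_const _
    exact this.const_mul k
  -- sin compositions
  have hsb : HasDerivAt (fun b : ℝ => Real.sin (k * (1 + b ^ 2 - s4 ^ 2 / 4 + ψ s1)))
      (Real.cos (k * (1 + s2 ^ 2 - s4 ^ 2 / 4 + ψ s1)) * (k * (2 * s2 ^ 1))) s2 :=
    (Real.hasDerivAt_sin _).comp s2 hub
  have hsc : HasDerivAt (fun c : ℝ => Real.sin (k * (1 + s2 ^ 2 - c ^ 2 / 4 + ψ s1)))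
      (Real.cos (k * (1 + s2 ^ 2 - s4 ^ 2 / 4 + ψ s1)) * (k * (-(2 * s4 ^ 1 / 4)))) s4 :=
    (Real.hasDerivAt_sin _).comp s4 huc
  set θ := k * (1 + s2 ^ 2 - s4 ^ 2 / 4 + ψ s1)
  -- M derivatives
  have hMb := (hsb.const_mul A).const_add (h s1)
  have hMc := (hsc.const_mul A).const_add (h s1)
  -- μ derivatives
  have hmb := (((((hsb.const_mul A).const_mul (2 * G * k)).div_const
      (Real.sqrt s1)).pow 2).const_sub 1).const_mul ((F s1) ^ 2)
  have hmc := (((((hsc.const_mul A).const_mul (2 * G * k)).div_const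
      (Real.sqrt s1)).pow 2).const_sub 1).const_mul ((F s1) ^ 2)
  simp only [Pi.pow_apply] at hmb hmc
  rw [hMb.deriv, hMc.deriv, hmb.deriv, hmc.deriv]
  ring
end

section
/- For GM > m₀, the function f₃¹(x) = 1 − πx²/ζ² + (x²/ζ²)·arcsin(2GMζ²/x³) is negative for all x > x_min = (2GMζ²)^{1/3}. -/
/-- For `GM > m₀`, the function `f₃¹(x) = 1 − πx²/ζ² + (x²/ζ²)·arcsin(2GMζ²/x³)`
is negative for all `x > x_min`. -/
theorem stmt12 (G M ζ : ℝ) (hG : 0 < G) (hM : 0 < M) (hζ : 0 < ζ)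
    (hm : ζ / 2 * (2 / Real.pi) ^ ((3 : ℝ) / 2) < G * M) :
    let xmin : ℝ := (2 * G * M * ζ ^ 2) ^ ((1 : ℝ) / 3)
    let f : ℝ → ℝ := fun x =>
      1 - Real.pi * x ^ 2 / ζ ^ 2 +
        x ^ 2 / ζ ^ 2 * Real.arcsin (2 * G * M * ζ ^ 2 / x ^ 3)
    ∀ x, xmin < x → f x < 0 := by
  intro xmin f x hx
  have hπ : (0:ℝ) < Real.pi := Real.pi_pos
  have hζ2 : (0:ℝ) < ζ ^ 2 := by positivity
  have ha : (0:ℝ) < 2 * G * M * ζ ^ 2 := by positivity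
  have hxmin : 0 < xmin := Real.rpow_pos_of_pos ha _
  have hx0 : 0 < x := hxmin.trans hx
  -- x^3 > 2GMζ²
  have hx3 : 2 * G * M * ζ ^ 2 < x ^ 3 := by
    have h1 : xmin ^ (3:ℝ) < x ^ (3:ℝ) :=
      Real.rpow_lt_rpow hxmin.le hx (by norm_num)
    have h2 : xmin ^ (3:ℝ) = 2 * G * M * ζ ^ 2 := by
      show ((2 * G * M * ζ ^ 2) ^ ((1:ℝ)/3)) ^ (3:ℝ) = _
      rw [← Real.rpow_mul ha.le]; norm_num
    have h3 : x ^ (3:ℝ) = x ^ 3 := by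
      rw [← Real.rpow_natCast x 3]; norm_num
    rw [h2, h3] at h1; exact h1
  have hx3pos : (0:ℝ) < x ^ 3 := by positivity
  set u : ℝ := 2 * G * M * ζ ^ 2 / x ^ 3 with hu
  have hu1 : u < 1 := (div_lt_one hx3pos).mpr hx3
  have harc : Real.arcsin u < Real.pi / 2 := Real.arcsin_lt_pi_div_two.mpr hu1
  -- key : ζ² < π/2 * x²
  have hb : (0:ℝ) < ζ * (2 / Real.pi) ^ ((1:ℝ)/2) := by positivity
  have hb3 : (ζ * (2 / Real.pi) ^ ((1:ℝ)/2)) ^ 3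
      = ζ ^ 3 * (2 / Real.pi) ^ ((3:ℝ)/2) := by
    rw [mul_pow, ← Real.rpow_natCast ((2 / Real.pi) ^ ((1:ℝ)/2)) 3,
      ← Real.rpow_mul (by positivity : (0:ℝ) ≤ 2 / Real.pi)]
    norm_num
  have hbx : ζ * (2 / Real.pi) ^ ((1:ℝ)/2) < x := by
    have hcube : (ζ * (2 / Real.pi) ^ ((1:ℝ)/2)) ^ 3 < x ^ 3 := by
      rw [hb3]
      nlinarith [hm, hζ2, Real.rpow_pos_of_pos (by positivity : (0:ℝ) < 2 / Real.pi) ((3:ℝ)/2)]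
    exact lt_of_pow_lt_pow_left₀ 3 hx0.le hcube
  have hbsq : ((2 / Real.pi) ^ ((1:ℝ)/2)) ^ 2 = 2 / Real.pi := by
    rw [← Real.rpow_natCast ((2 / Real.pi) ^ ((1:ℝ)/2)) 2,
      ← Real.rpow_mul (by positivity : (0:ℝ) ≤ 2 / Real.pi)]
    norm_num
  have key : ζ ^ 2 < Real.pi / 2 * x ^ 2 := by
    have hsq : (ζ * (2 / Real.pi) ^ ((1:ℝ)/2)) ^ 2 < x ^ 2 := by
      nlinarith [hbx, hb]
    rw [mul_pow, hbsq] at hsq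
    have hmul := mul_lt_mul_of_pos_right hsq hπ
    have hinv : ζ ^ 2 * (2 / Real.pi) * Real.pi = 2 * ζ ^ 2 := by
      field_simp
    rw [hinv] at hmul
    nlinarith [hmul]
  have hfrac : (0:ℝ) < x ^ 2 / ζ ^ 2 := by positivity
  have h4 : x ^ 2 / ζ ^ 2 * Real.arcsin u < x ^ 2 / ζ ^ 2 * (Real.pi / 2) :=
    mul_lt_mul_of_pos_left harc hfrac
  have ht : 1 < Real.pi / 2 * x ^ 2 / ζ ^ 2 := by
    rw [lt_div_iff₀ hζ2, one_mul]; linarith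
  show 1 - Real.pi * x ^ 2 / ζ ^ 2 + x ^ 2 / ζ ^ 2 * Real.arcsin u < 0
  have hexp : x ^ 2 / ζ ^ 2 * (Real.pi / 2) = Real.pi / 2 * x ^ 2 / ζ ^ 2 := by ring
  have hexp2 : Real.pi * x ^ 2 / ζ ^ 2 = 2 * (Real.pi / 2 * x ^ 2 / ζ ^ 2) := by ring
  rw [hexp] at h4
  rw [hexp2]
  linarith
end
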